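/- In the polynomial ring ℤ[x,y], the product (x-y)(x²-y²)⋯(xⁿ-yⁿ) divides the product (x^{m+1}-y^{m+1})(x^{m+2}-y^{m+2})⋯(x^{m+n}-y^{m+n}) for all m, n ≥ 1. (A tractable integer version: for all integers x > y ≥ 1 and all m, n ≥ 1, ∏_{i=1}^{n}(x^i - y^i) divides ∏_{i=1}^{n}(x^{m+i} - y^{m+i}).) -/

import Mathlib

lemma key_dvd {R : Type*} [CommRing R] (a b : R) (m : ℕ) :
    ∀ n, (∏ i ∈ Finset.range n, (a ^ (i + 1) - b ^ (i + 1))) ∣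
      ∏ i ∈ Finset.range n, (a ^ (m + i + 1) - b ^ (m + i + 1)) := by
  induction m with
  | zero => intro n; simp
  | succ m ihm =>
    intro n
    induction n with
    | zero => simp
    | succ n ihn =>
      rw [Finset.prod_range_succ, Finset.prod_range_succ]
      have hk : a ^ (m + 1 + n + 1) - b ^ (m + 1 + n + 1)
          = a ^ (m + 1) * (a ^ (n + 1) - b ^ (n + 1))
            + b ^ (n + 1) * (a ^ (m + 1) - b ^ (m + 1)) := by ring
      rw [hk, mul_add]
      apply dvd_add
      · exact mul_dvd_mul ihn (dvd_mul_left _ _)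
      · have h2 : (∏ i ∈ Finset.range n, (a ^ (m + 1 + i + 1) - b ^ (m + 1 + i + 1)))
            * (b ^ (n + 1) * (a ^ (m + 1) - b ^ (m + 1)))
            = b ^ (n + 1) * ∏ i ∈ Finset.range (n + 1), (a ^ (m + i + 1) - b ^ (m + i + 1)) := by
          rw [Finset.prod_range_succ']
          have hc : ∏ i ∈ Finset.range n, (a ^ (m + 1 + i + 1) - b ^ (m + 1 + i + 1))
              = ∏ i ∈ Finset.range n, (a ^ (m + (i + 1) + 1) - b ^ (m + (i + 1) + 1)) := by
            apply Finset.prod_congr rfl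
            intro i _
            ring_nf
          rw [hc]
          ring
        rw [h2]
        have h3 := (ihm (n + 1)).mul_left (b ^ (n + 1))
        rwa [Finset.prod_range_succ] at h3

lemma icc_range {R : Type*} [CommRing R] (n : ℕ) (f : ℕ → R) :
    ∏ i ∈ Finset.Icc 1 n, f i = ∏ i ∈ Finset.range n, f (i + 1) := by
  induction n with
  | zero => simp
  | succ k ih =>
    rw [Finset.prod_range_succ, ← ih,
      Finset.prod_Icc_succ_top (Nat.succ_le_succ (Nat.zero_le k))]

open MvPolynomial in
theorem poly_prod_dvd (m n : ℕ) (hm : 1 ≤ m) (hn : 1 ≤ n) :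
    (∏ i ∈ Finset.Icc 1 n, ((X 0 : MvPolynomial (Fin 2) ℤ) ^ i - (X 1) ^ i)) ∣
      ∏ i ∈ Finset.Icc 1 n, ((X 0 : MvPolynomial (Fin 2) ℤ) ^ (m + i) - (X 1) ^ (m + i)) := by
  have h := key_dvd (X 0 : MvPolynomial (Fin 2) ℤ) (X 1) m n
  rw [icc_range, icc_range]
  exact h
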